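/- In the depth-2 Jones tower setup, the bilinear form ⟨a, b⟩ := λ⁻² F(a e₂ e₁ b) on A × B is non-degenerate: if a ∈ A satisfies F(a e₂ e₁ b) = 0 for all b ∈ B, then a = 0; and if b ∈ B satisfies F(a e₂ e₁ b) = 0 for all a ∈ A, then b = 0. In particular, the map b ↦ E_{M₁}(e₂ e₁ b) is a k-linear bijection from B onto A. -/
import Mathlib


open scoped TensorProduct

/-- The depth-2 Jones tower setup: a tower `N ⊆ M ⊆ M₁ ⊆ R` (with `R` playing the
role of `M₂`) of unital `k`-algebras, with conditional expectations, Jones idempotents,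
braid-like relations and depth-2 orthogonal dual bases, as in the paper. -/
structure JonesTower (k : Type*) [Field k] (R : Type*) [Ring R] [Algebra k R] where
  N : Subalgebra k R
  M : Subalgebra k R
  M₁ : Subalgebra k R
  hNM : N ≤ M
  hMM₁ : M ≤ M₁
  lam : k
  hlam : lam ≠ 0
  E : R →ₗ[k] R
  EM : R →ₗ[k] R
  EM1 : R →ₗ[k] R
  hE_mem : ∀ m ∈ M, E m ∈ N
  hEM_mem : ∀ x ∈ M₁, EM x ∈ M
  hEM1_mem : ∀ x : R, EM1 x ∈ M₁
  hE_one : E 1 = 1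
  hEM_one : EM 1 = 1
  hEM1_one : EM1 1 = 1
  hE_bimod : ∀ n ∈ N, ∀ n' ∈ N, ∀ m ∈ M, E (n * m * n') = n * E m * n'
  hEM_bimod : ∀ m ∈ M, ∀ m' ∈ M, ∀ x ∈ M₁, EM (m * x * m') = m * EM x * m'
  hEM1_bimod : ∀ w ∈ M₁, ∀ w' ∈ M₁, ∀ x : R, EM1 (w * x * w') = w * EM1 x * w'
  n₀ : ℕ
  xb : Fin n₀ → R
  yb : Fin n₀ → R
  hxb : ∀ i, xb i ∈ M
  hyb : ∀ i, yb i ∈ M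
  hE_dual₁ : ∀ m ∈ M, ∑ i, E (m * xb i) * yb i = m
  hE_dual₂ : ∀ m ∈ M, ∑ i, xb i * E (yb i * m) = m
  hE_index : ∑ i, xb i * yb i = lam⁻¹ • (1 : R)
  hCMN : ∀ c ∈ M, (∀ n ∈ N, c * n = n * c) → ∃ μ : k, c = μ • (1 : R)
  hCM₁M : ∀ c ∈ M₁, (∀ m ∈ M, c * m = m * c) → ∃ μ : k, c = μ • (1 : R)
  hCM₂M₁ : ∀ c : R, (∀ w ∈ M₁, c * w = w * c) → ∃ μ : k, c = μ • (1 : R)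
  e₁ : R
  e₂ : R
  he₁ : e₁ ∈ M₁
  he₁N : ∀ n ∈ N, e₁ * n = n * e₁
  he₂M : ∀ m ∈ M, e₂ * m = m * e₂
  he₁me₁ : ∀ m ∈ M, e₁ * m * e₁ = E m * e₁
  he₂we₂ : ∀ w ∈ M₁, e₂ * w * e₂ = EM w * e₂
  hEMe₁ : EM e₁ = lam • (1 : R)
  hEM1e₂ : EM1 e₂ = lam • (1 : R)
  hspanM₁ : Subalgebra.toSubmodule M₁ =
    Submodule.span k {x : R | ∃ m ∈ M, ∃ m' ∈ M, x = m * e₁ * m'}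
  hspanM₂ : (⊤ : Submodule k R) =
    Submodule.span k {x : R | ∃ w ∈ M₁, ∃ w' ∈ M₁, x = w * e₂ * w'}
  hbraid₁ : e₁ * e₂ * e₁ = lam • e₁
  hbraid₂ : e₂ * e₁ * e₂ = lam • e₂
  r : ℕ
  zb : Fin r → R
  wb : Fin r → R
  hzbM₁ : ∀ i, zb i ∈ M₁
  hwbM₁ : ∀ i, wb i ∈ M₁
  hzbN : ∀ i, ∀ n ∈ N, zb i * n = n * zb i
  hwbN : ∀ i, ∀ n ∈ N, wb i * n = n * wb i
  hzw_orth : ∀ i j, EM (wb i * zb j) = if i = j then (1 : R) else 0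
  hzw_dual₁ : ∀ x ∈ M₁, ∑ i, EM (x * zb i) * wb i = x
  hzw_dual₂ : ∀ x ∈ M₁, ∑ i, zb i * EM (wb i * x) = x
  hzw_index : ∑ i, zb i * wb i = lam⁻¹ • (1 : R)
  s : ℕ
  ub : Fin s → R
  vb : Fin s → R
  hubM : ∀ i, ∀ m ∈ M, ub i * m = m * ub i
  hvbM : ∀ i, ∀ m ∈ M, vb i * m = m * vb i
  huv_orth : ∀ i j, EM1 (vb i * ub j) = if i = j then (1 : R) else 0
  huv_dual₁ : ∀ x : R, ∑ i, EM1 (x * ub i) * vb i = x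
  huv_dual₂ : ∀ x : R, ∑ i, ub i * EM1 (vb i * x) = x
  huv_index : ∑ i, ub i * vb i = lam⁻¹ • (1 : R)
  F : R →ₗ[k] k
  hF : ∀ c : R, (∀ n ∈ N, c * n = n * c) → algebraMap k R (F c) = EM (EM1 c)

variable {k : Type*} [Field k] {R : Type*} [Ring R] [Algebra k R]

/-- The second centralizer `A = C_{M₁}(N)`. -/
def JonesTower.A (T : JonesTower k R) : Subalgebra k R :=
  T.M₁ ⊓ Subalgebra.centralizer k (T.N : Set R)

/-- The second centralizer `B = C_{M₂}(M)`. -/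
def JonesTower.B (T : JonesTower k R) : Subalgebra k R :=
  Subalgebra.centralizer k (T.M : Set R)

/-- The big centralizer `C = C_{M₂}(N)`. -/
def JonesTower.C (T : JonesTower k R) : Subalgebra k R :=
  Subalgebra.centralizer k (T.N : Set R)

namespace JonesTower

variable (T : JonesTower k R)

lemma hNM₁ : T.N ≤ T.M₁ := le_trans T.hNM T.hMM₁

lemma mem_B_iff {b : R} : b ∈ T.B ↔ ∀ m ∈ T.M, m * b = b * m :=
  Subalgebra.mem_centralizer_iff k

lemma mem_A_iff {a : R} : a ∈ T.A ↔ a ∈ T.M₁ ∧ ∀ n ∈ T.N, n * a = a * n := by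
  constructor
  · rintro ⟨h1, h2⟩
    exact ⟨h1, fun n hn => h2 n hn⟩
  · rintro ⟨h1, h2⟩
    exact ⟨h1, fun n hn => h2 n hn⟩

lemma EM1_lmul {w : R} (hw : w ∈ T.M₁) (x : R) : T.EM1 (w * x) = w * T.EM1 x := by
  have := T.hEM1_bimod w hw 1 T.M₁.one_mem x
  simpa using this

lemma EM1_rmul {w : R} (hw : w ∈ T.M₁) (x : R) : T.EM1 (x * w) = T.EM1 x * w := by
  have := T.hEM1_bimod 1 T.M₁.one_mem w hw x
  simpa using this

/-- `e₂`-absorption: `e₂ · E_{M₁}(e₂ ξ) = λ (e₂ ξ)` for every `ξ ∈ M₂`. -/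
lemma e₂_absorb (ξ : R) : T.e₂ * T.EM1 (T.e₂ * ξ) = T.lam • (T.e₂ * ξ) := by
  have hξ : ξ ∈ (⊤ : Submodule k R) := Submodule.mem_top
  rw [T.hspanM₂] at hξ
  induction hξ using Submodule.span_induction with
  | mem x hx =>
    obtain ⟨w, hw, w', hw', rfl⟩ := hx
    have h1 : T.e₂ * (w * T.e₂ * w') = T.EM w * T.e₂ * w' := by
      rw [← mul_assoc, ← mul_assoc, T.he₂we₂ w hw]
    rw [h1, T.hEM1_bimod (T.EM w) (T.hMM₁ (T.hEM_mem w hw)) w' hw' T.e₂, T.hEM1e₂]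
    have h2 : T.e₂ * T.EM w = T.EM w * T.e₂ := T.he₂M _ (T.hEM_mem w hw)
    calc T.e₂ * (T.EM w * T.lam • (1 : R) * w')
        = T.lam • (T.e₂ * (T.EM w * w')) := by
          simp only [mul_smul_comm, smul_mul_assoc, mul_one]
      _ = T.lam • (T.EM w * T.e₂ * w') := by rw [← mul_assoc, h2]
  | zero => simp
  | add x y hx hy ihx ihy =>
    simp only [mul_add, map_add, smul_add, ihx, ihy]
  | smul c x hx ih =>
    simp only [mul_smul_comm, map_smul, ih, smul_comm c T.lam]

/-- The Casimir trick: if `t` commutes with `N`, then `∑ xᵢ t yᵢ` commutes with `M`. -/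
lemma casimir_cent (t : R) (ht : ∀ n ∈ T.N, t * n = n * t) :
    ∀ m ∈ T.M, m * (∑ i, T.xb i * t * T.yb i) = (∑ i, T.xb i * t * T.yb i) * m := by
  intro m hm
  rw [Finset.sum_mul, Finset.mul_sum]
  symm
  have step1 : ∀ i, T.xb i * t * T.yb i * m
      = ∑ j, T.xb i * T.E (T.yb i * m * T.xb j) * t * T.yb j := by
    intro i
    conv_lhs => rw [mul_assoc,
      show T.yb i * m = ∑ j, T.E (T.yb i * m * T.xb j) * T.yb j from
        (by simpa using (T.hE_dual₁ _ (T.M.mul_mem (T.hyb i) hm)).symm)]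
    rw [Finset.mul_sum]
    refine Finset.sum_congr rfl fun j _ => ?_
    have hE : T.E (T.yb i * m * T.xb j) ∈ T.N :=
      T.hE_mem _ (T.M.mul_mem (T.M.mul_mem (T.hyb i) hm) (T.hxb j))
    simp only [← mul_assoc]
    rw [mul_assoc (T.xb i) t, ht _ hE, ← mul_assoc]
  calc (∑ i, T.xb i * t * T.yb i * m)
      = ∑ i, ∑ j, T.xb i * T.E (T.yb i * m * T.xb j) * t * T.yb j := by
        exact Finset.sum_congr rfl fun i _ => step1 i
    _ = ∑ j, (∑ i, T.xb i * T.E (T.yb i * (m * T.xb j))) * t * T.yb j := by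
        rw [Finset.sum_comm]
        exact Finset.sum_congr rfl fun j _ => by
          simp only [Finset.sum_mul, mul_assoc]
    _ = ∑ j, m * T.xb j * t * T.yb j := by
        refine Finset.sum_congr rfl fun j _ => ?_
        rw [T.hE_dual₂ _ (T.M.mul_mem hm (T.hxb j))]
    _ = ∑ j, m * (T.xb j * t * T.yb j) := by
        exact Finset.sum_congr rfl fun j _ => by simp only [mul_assoc]

lemma sum_Ey : (∑ i, T.E (T.xb i) * T.yb i) = 1 := by
  simpa using T.hE_dual₁ 1 T.M.one_mem

/-- `∑ xᵢ e₁ yᵢ = 1`. -/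
lemma sum_xey [Nontrivial R] : (∑ i, T.xb i * T.e₁ * T.yb i) = 1 := by
  have hmem : (∑ i, T.xb i * T.e₁ * T.yb i) ∈ T.M₁ :=
    Subalgebra.sum_mem _ fun i _ =>
      T.M₁.mul_mem (T.M₁.mul_mem (T.hMM₁ (T.hxb i)) T.he₁) (T.hMM₁ (T.hyb i))
  obtain ⟨μ, hμ⟩ := T.hCM₁M _ hmem
    (fun m hm => (T.casimir_cent T.e₁ (fun n hn => T.he₁N n hn) m hm).symm)
  have hEMS : T.EM (∑ i, T.xb i * T.e₁ * T.yb i) = 1 := by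
    rw [map_sum]
    have : ∀ i ∈ (Finset.univ : Finset (Fin T.n₀)),
        T.EM (T.xb i * T.e₁ * T.yb i) = T.lam • (T.xb i * T.yb i) := by
      intro i _
      rw [T.hEM_bimod _ (T.hxb i) _ (T.hyb i) _ T.he₁, T.hEMe₁]
      simp [mul_smul_comm, smul_mul_assoc]
    rw [Finset.sum_congr rfl this, ← Finset.smul_sum, T.hE_index, smul_smul,
      mul_inv_cancel₀ T.hlam, one_smul]
  rw [hμ] at hEMS ⊢
  rw [map_smul, T.hEM_one] at hEMS
  have : μ = 1 := by
    have h1 : algebraMap k R μ = algebraMap k R 1 := by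
      simpa [Algebra.algebraMap_eq_smul_one] using hEMS
    exact (algebraMap k R).injective h1
  rw [this, one_smul]

/-- Injectivity: if `b ∈ B` and `E_{M₁}(e₂ e₁ b) = 0` then `b = 0`. -/
lemma phi_eq_zero [Nontrivial R] {b : R} (hb : b ∈ T.B) (h : T.EM1 (T.e₂ * T.e₁ * b) = 0) : b = 0 := by
  have h2 := T.e₂_absorb (T.e₁ * b)
  simp only [← mul_assoc] at h2
  rw [h, mul_zero] at h2
  have h3 : T.e₂ * T.e₁ * b = 0 := by
    have := congrArg (fun x => T.lam⁻¹ • x) h2.symm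
    simpa [smul_smul, inv_mul_cancel₀ T.hlam] using this
  have h5 : T.lam • (T.e₁ * b) = 0 := by
    have : T.e₁ * (T.e₂ * T.e₁ * b) = (T.e₁ * T.e₂ * T.e₁) * b := by
      simp only [mul_assoc]
    rw [h3, mul_zero, T.hbraid₁, smul_mul_assoc] at this
    exact this.symm
  have h4 : T.e₁ * b = 0 := by
    have := congrArg (fun x => T.lam⁻¹ • x) h5
    simpa [smul_smul, inv_mul_cancel₀ T.hlam] using this
  have hb' := T.mem_B_iff.mp hb
  calc b = (∑ i, T.xb i * T.e₁ * T.yb i) * b := by rw [T.sum_xey, one_mul]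
    _ = ∑ i, T.xb i * (T.e₁ * (T.yb i * b)) := by
        rw [Finset.sum_mul]; simp only [mul_assoc]
    _ = ∑ i, T.xb i * ((T.e₁ * b) * T.yb i) := by
        refine Finset.sum_congr rfl fun i _ => ?_
        rw [hb' _ (T.hyb i)]
        simp only [mul_assoc]
    _ = 0 := by simp [h4]

/-- The inverse map `A → B`. -/
noncomputable def psi (a : R) : R :=
  (T.lam⁻¹ * T.lam⁻¹) • ∑ i, T.xb i * (T.e₁ * T.e₂ * a) * T.yb i

lemma psi_mem_B {a : R} (ha : a ∈ T.A) : T.psi a ∈ T.B := by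
  obtain ⟨haM₁, haN⟩ := T.mem_A_iff.mp ha
  rw [mem_B_iff]
  intro m hm
  have ht : ∀ n ∈ T.N, (T.e₁ * T.e₂ * a) * n = n * (T.e₁ * T.e₂ * a) := by
    intro n hn
    have h1 : a * n = n * a := (haN n hn).symm
    have h2 : T.e₂ * n = n * T.e₂ := T.he₂M n (T.hNM hn)
    have h3 : T.e₁ * n = n * T.e₁ := T.he₁N n hn
    calc T.e₁ * T.e₂ * a * n = T.e₁ * (T.e₂ * (a * n)) := by simp only [mul_assoc]
      _ = T.e₁ * (T.e₂ * n * a) := by rw [h1]; simp only [mul_assoc]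
      _ = T.e₁ * n * (T.e₂ * a) := by rw [h2]; simp only [mul_assoc]
      _ = n * (T.e₁ * T.e₂ * a) := by rw [h3]; simp only [mul_assoc]
  unfold psi
  rw [mul_smul_comm, smul_mul_assoc, T.casimir_cent _ ht m hm]

lemma phi_psi {a : R} (ha : a ∈ T.A) : T.EM1 (T.e₂ * T.e₁ * T.psi a) = a := by
  obtain ⟨haM₁, haN⟩ := T.mem_A_iff.mp ha
  unfold psi
  rw [mul_smul_comm, map_smul, Finset.mul_sum, map_sum]
  have key : ∀ i ∈ (Finset.univ : Finset (Fin T.n₀)),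
      T.EM1 (T.e₂ * T.e₁ * (T.xb i * (T.e₁ * T.e₂ * a) * T.yb i))
        = (T.lam * T.lam) • (a * (T.E (T.xb i) * T.yb i)) := by
    intro i _
    have hExi : T.E (T.xb i) ∈ T.N := T.hE_mem _ (T.hxb i)
    have key1 : T.e₂ * T.e₁ * (T.xb i * (T.e₁ * T.e₂ * a) * T.yb i)
        = T.lam • (T.E (T.xb i) * T.e₂ * (a * T.yb i)) := by
      calc T.e₂ * T.e₁ * (T.xb i * (T.e₁ * T.e₂ * a) * T.yb i)
          = T.e₂ * (T.e₁ * T.xb i * T.e₁) * T.e₂ * a * T.yb i := by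
            simp only [mul_assoc]
        _ = T.e₂ * (T.E (T.xb i) * T.e₁) * T.e₂ * a * T.yb i := by
            rw [T.he₁me₁ _ (T.hxb i)]
        _ = T.e₂ * T.E (T.xb i) * (T.e₁ * T.e₂ * (a * T.yb i)) := by
            simp only [mul_assoc]
        _ = T.E (T.xb i) * T.e₂ * (T.e₁ * T.e₂ * (a * T.yb i)) := by
            rw [T.he₂M _ (T.hNM hExi)]
        _ = T.E (T.xb i) * (T.e₂ * T.e₁ * T.e₂) * (a * T.yb i) := by
            simp only [mul_assoc]
        _ = T.lam • (T.E (T.xb i) * T.e₂ * (a * T.yb i)) := by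
            rw [T.hbraid₂]
            simp only [mul_smul_comm, smul_mul_assoc]
    rw [key1, map_smul,
      T.hEM1_bimod _ (T.hNM₁ hExi) _ (T.M₁.mul_mem haM₁ (T.hMM₁ (T.hyb i))) T.e₂,
      T.hEM1e₂]
    have hcomm : T.E (T.xb i) * a = a * T.E (T.xb i) := haN _ hExi
    calc T.lam • (T.E (T.xb i) * T.lam • (1 : R) * (a * T.yb i))
        = (T.lam * T.lam) • (T.E (T.xb i) * a * T.yb i) := by
          simp only [mul_smul_comm, smul_mul_assoc, mul_one, smul_smul, mul_assoc]
      _ = (T.lam * T.lam) • (a * (T.E (T.xb i) * T.yb i)) := by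
          rw [hcomm]; simp only [mul_assoc]
  rw [Finset.sum_congr rfl key, ← Finset.smul_sum, ← Finset.mul_sum, T.sum_Ey,
    mul_one, smul_smul]
  have : T.lam⁻¹ * T.lam⁻¹ * (T.lam * T.lam) = 1 := by
    rw [mul_mul_mul_comm, inv_mul_cancel₀ T.hlam]; rw [one_mul]
  rw [this, one_smul]

lemma phi_mem_A {b : R} (hb : b ∈ T.B) : T.EM1 (T.e₂ * T.e₁ * b) ∈ T.A := by
  rw [mem_A_iff]
  refine ⟨T.hEM1_mem _, fun n hn => ?_⟩
  have hnM : n ∈ T.M := T.hNM hn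
  have h1 : n * (T.e₂ * T.e₁ * b) = (T.e₂ * T.e₁ * b) * n := by
    calc n * (T.e₂ * T.e₁ * b) = n * T.e₂ * (T.e₁ * b) := by simp only [mul_assoc]
      _ = T.e₂ * (n * T.e₁) * b := by rw [← T.he₂M n hnM]; simp only [mul_assoc]
      _ = T.e₂ * (T.e₁ * (n * b)) := by rw [← T.he₁N n hn]; simp only [mul_assoc]
      _ = T.e₂ * (T.e₁ * (b * n)) := by rw [T.mem_B_iff.mp hb n hnM]
      _ = (T.e₂ * T.e₁ * b) * n := by simp only [mul_assoc]
  rw [← T.EM1_lmul (T.hNM₁ hn), h1, T.EM1_rmul (T.hNM₁ hn)]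

lemma pairing {a b : R} (ha : a ∈ T.A) (hb : b ∈ T.B) :
    T.EM (a * T.EM1 (T.e₂ * T.e₁ * b)) = algebraMap k R (T.F (a * T.e₂ * T.e₁ * b)) := by
  obtain ⟨haM₁, haN⟩ := T.mem_A_iff.mp ha
  have hc : ∀ n ∈ T.N, (a * T.e₂ * T.e₁ * b) * n = n * (a * T.e₂ * T.e₁ * b) := by
    intro n hn
    have hnM : n ∈ T.M := T.hNM hn
    calc a * T.e₂ * T.e₁ * b * n = a * (T.e₂ * (T.e₁ * (b * n))) := by simp only [mul_assoc]
      _ = a * (T.e₂ * (T.e₁ * (n * b))) := by rw [← T.mem_B_iff.mp hb n hnM]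
      _ = a * (T.e₂ * (T.e₁ * n * b)) := by simp only [mul_assoc]
      _ = a * (T.e₂ * n * (T.e₁ * b)) := by rw [T.he₁N n hn]; simp only [mul_assoc]
      _ = a * n * (T.e₂ * (T.e₁ * b)) := by rw [T.he₂M n hnM]; simp only [mul_assoc]
      _ = n * (a * (T.e₂ * (T.e₁ * b))) := by rw [← haN n hn]; simp only [mul_assoc]
      _ = n * (a * T.e₂ * T.e₁ * b) := by simp only [mul_assoc]
  rw [T.hF _ hc]
  congr 1
  rw [show a * T.e₂ * T.e₁ * b = a * (T.e₂ * T.e₁ * b) by simp only [mul_assoc],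
    T.EM1_lmul haM₁]

end JonesTower

/-- The bilinear form `⟨a, b⟩ = λ⁻² F(a e₂ e₁ b)` on `A × B` is non-degenerate,
and `b ↦ E_{M₁}(e₂ e₁ b)` is a (`k`-linear) bijection from `B` onto `A`. -/
theorem duality_form_nondegenerate (T : JonesTower k R) [Nontrivial R] :
    (∀ a ∈ T.A, (∀ b ∈ T.B, T.F (a * T.e₂ * T.e₁ * b) = 0) → a = 0) ∧
    (∀ b ∈ T.B, (∀ a ∈ T.A, T.F (a * T.e₂ * T.e₁ * b) = 0) → b = 0) ∧
    Set.BijOn (fun b : R => T.EM1 (T.e₂ * T.e₁ * b)) (T.B : Set R) (T.A : Set R) := by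
  have hzA : ∀ i, T.zb i ∈ T.A :=
    fun i => T.mem_A_iff.mpr ⟨T.hzbM₁ i, fun n hn => (T.hzbN i n hn).symm⟩
  have hwA : ∀ i, T.wb i ∈ T.A :=
    fun i => T.mem_A_iff.mpr ⟨T.hwbM₁ i, fun n hn => (T.hwbN i n hn).symm⟩
  refine ⟨?_, ?_, ?_, ?_, ?_⟩
  · intro a ha h
    have haM₁ := (T.mem_A_iff.mp ha).1
    have key : ∀ i, T.EM (a * T.zb i) = 0 := by
      intro i
      have hbB := T.psi_mem_B (hzA i)
      have hp := T.pairing ha hbB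
      rw [T.phi_psi (hzA i), h _ hbB, map_zero] at hp
      exact hp
    have hd := (T.hzw_dual₁ a haM₁).symm
    simpa [key] using hd
  · intro b hb h
    have key : T.EM1 (T.e₂ * T.e₁ * b) = 0 := by
      have hkey : ∀ i, T.EM (T.wb i * T.EM1 (T.e₂ * T.e₁ * b)) = 0 := by
        intro i
        have hp := T.pairing (hwA i) hb
        rw [h _ (hwA i), map_zero] at hp
        exact hp
      have hd := (T.hzw_dual₂ _ (T.hEM1_mem (T.e₂ * T.e₁ * b))).symm
      simpa [hkey] using hd
    exact T.phi_eq_zero hb key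
  · intro b hb
    exact T.phi_mem_A hb
  · intro b₁ hb₁ b₂ hb₂ heq
    have hsub : b₁ - b₂ ∈ T.B := T.B.sub_mem hb₁ hb₂
    have hz : T.EM1 (T.e₂ * T.e₁ * (b₁ - b₂)) = 0 := by
      rw [mul_sub, map_sub]
      simpa using sub_eq_zero.mpr heq
    exact sub_eq_zero.mp (T.phi_eq_zero hsub hz)
  · intro a ha
    exact ⟨T.psi a, T.psi_mem_B ha, T.phi_psi ha⟩
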